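/- Given the Johnson-Lindenstrauss property ((1−ε)‖x−y‖ ≤ ‖f(x)−f(y)‖ ≤ (1+ε)‖x−y‖ for all x,y ∈ X) for a map f and finite X ⊂ R^d, for every subset S ⊆ X and every α, the smallest enclosing ball radius satisfies: ρ(S) ≤ α implies ρ(f(S)) ≤ α/(1−ε), and ρ(f(S)) ≤ α implies ρ(S) ≤ α/(1−ε). -/

import Mathlib

open MeasureTheory ProbabilityTheory Metric

open RealInnerProductSpace

section helpers
variable {E ι : Type*} [NormedAddCommGroup E] [InnerProductSpace ℝ E]

lemma sum_mul_inner' (I : Finset ι) (μ : ι → ℝ) (v : ι → E) (c : E) :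
    ∑ z ∈ I, μ z * ⟪v z, c⟫ = ⟪∑ z ∈ I, μ z • v z, c⟫ := by
  rw [sum_inner]
  simp [real_inner_smul_left]

lemma weighted_aux' (I : Finset ι) (μ : ι → ℝ) (v : ι → E)
    (hμ : ∑ z ∈ I, μ z = 1) (c : E) :
    ∑ z ∈ I, μ z * ‖v z - c‖ ^ 2
      = ∑ z ∈ I, μ z * ‖v z‖ ^ 2 - 2 * ⟪∑ z' ∈ I, μ z' • v z', c⟫ + ‖c‖ ^ 2 := by
  have expand : ∀ a b : E, ‖a - b‖ ^ 2 = ‖a‖ ^ 2 - 2 * ⟪a, b⟫ + ‖b‖ ^ 2 := fun a b =>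
    norm_sub_sq_real a b
  calc ∑ z ∈ I, μ z * ‖v z - c‖ ^ 2
      = ∑ z ∈ I, (μ z * ‖v z‖ ^ 2 - 2 * (μ z * ⟪v z, c⟫) + μ z * ‖c‖ ^ 2) :=
        Finset.sum_congr rfl (fun z _ => by rw [expand (v z) c]; ring)
    _ = ∑ z ∈ I, μ z * ‖v z‖ ^ 2 - 2 * ∑ z ∈ I, μ z * ⟪v z, c⟫ + ‖c‖ ^ 2 := by
        rw [Finset.sum_add_distrib, Finset.sum_sub_distrib, ← Finset.mul_sum,
          ← Finset.sum_mul, hμ]; ring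
    _ = _ := by rw [sum_mul_inner']

/-- Bias-variance identity. -/
lemma weighted_identity' (I : Finset ι) (μ : ι → ℝ) (v : ι → E)
    (hμ : ∑ z ∈ I, μ z = 1) (c : E) :
    ∑ z ∈ I, μ z * ‖v z - c‖ ^ 2
      = ∑ z ∈ I, μ z * ‖v z - ∑ z' ∈ I, μ z' • v z'‖ ^ 2
        + ‖(∑ z' ∈ I, μ z' • v z') - c‖ ^ 2 := by
  set q : E := ∑ z' ∈ I, μ z' • v z' with hq
  rw [weighted_aux' I μ v hμ c, weighted_aux' I μ v hμ q,
    norm_sub_sq_real q c, real_inner_self_eq_norm_sq]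
  ring

/-- Variance as half the average pairwise squared distance. -/
lemma weighted_pairs' (I : Finset ι) (μ : ι → ℝ) (v : ι → E)
    (hμ : ∑ z ∈ I, μ z = 1) :
    ∑ z ∈ I, ∑ z' ∈ I, μ z * μ z' * ‖v z - v z'‖ ^ 2
      = 2 * ∑ z ∈ I, μ z * ‖v z - ∑ z' ∈ I, μ z' • v z'‖ ^ 2 := by
  set q : E := ∑ z' ∈ I, μ z' • v z' with hq
  have h1 : ∀ z ∈ I, ∑ z' ∈ I, μ z * μ z' * ‖v z - v z'‖ ^ 2
      = μ z * (∑ z' ∈ I, μ z' * ‖v z' - v z‖ ^ 2) := by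
    intro z _
    rw [Finset.mul_sum]
    refine Finset.sum_congr rfl fun z' _ => ?_
    rw [norm_sub_rev]; ring
  rw [Finset.sum_congr rfl h1]
  have h2 : ∀ z ∈ I, μ z * (∑ z' ∈ I, μ z' * ‖v z' - v z‖ ^ 2)
      = μ z * (∑ z' ∈ I, μ z' * ‖v z' - q‖ ^ 2) + μ z * ‖q - v z‖ ^ 2 := by
    intro z _
    rw [weighted_identity' I μ v hμ (v z)]
    ring
  rw [Finset.sum_congr rfl h2, Finset.sum_add_distrib, ← Finset.sum_mul, hμ]
  have h3 : ∀ z ∈ I, μ z * ‖q - v z‖ ^ 2 = μ z * ‖v z - q‖ ^ 2 := fun z _ => by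
    rw [norm_sub_rev]
  rw [Finset.sum_congr rfl h3]
  ring

end helpers

set_option maxHeartbeats 2000000 in
/-- One-point Kirszbraun extension for finite sets: if `f` is `L`-Lipschitz on a finite set `s`
contained in the ball of radius `r` around `c`, then there is a point `y` within `L * r` of
every point of `f '' s`. -/
lemma onePoint_ext {E F : Type*} [NormedAddCommGroup E] [InnerProductSpace ℝ E]
    [NormedAddCommGroup F] [InnerProductSpace ℝ F] [FiniteDimensional ℝ F]
    (s : Finset E) (f : E → F) (L r : ℝ) (hL : 0 ≤ L) (c : E)
    (hr : ∀ x ∈ s, dist x c ≤ r)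
    (hf : ∀ x ∈ s, ∀ y ∈ s, dist (f x) (f y) ≤ L * dist x y) :
    ∃ y : F, ∀ x ∈ s, dist (f x) y ≤ L * r := by
  rcases s.eq_empty_or_nonempty with rfl | hs
  · exact ⟨0, by simp⟩
  classical
  have hr0 : 0 ≤ r := le_trans dist_nonneg (hr _ hs.choose_spec)
  set φ : F → E → ℝ := fun y x => ‖y - f x‖ ^ 2 - L ^ 2 * ‖x - c‖ ^ 2 with hφ
  set g : F → ℝ := fun y => s.sup' hs (φ y) with hg
  have gcont : Continuous g := by
    apply Continuous.finset_sup'_apply hs (f := fun x y => φ y x)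
    intro x hx
    exact ((continuous_id.sub continuous_const).norm.pow 2).sub continuous_const
  set K : Set F := convexHull ℝ (f '' ↑s) with hK
  have Kconv : Convex ℝ K := convex_convexHull ℝ _
  have Kcomp : IsCompact K := (s.finite_toSet.image f).isCompact_convexHull ℝ
  have Kne : K.Nonempty := ⟨f hs.choose, subset_convexHull ℝ _ ⟨hs.choose, hs.choose_spec, rfl⟩⟩
  have proj : ∀ y : F, ∃ q ∈ K, ∀ z ∈ K, ‖q - z‖ ≤ ‖y - z‖ := by
    intro y
    obtain ⟨q, hqK, hq⟩ := exists_norm_eq_iInf_of_complete_convex Kne Kcomp.isComplete Kconv y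
    have hip : ∀ w ∈ K, ⟪y - q, w - q⟫ ≤ 0 :=
      (norm_eq_iInf_iff_real_inner_le_zero Kconv hqK).mp hq
    refine ⟨q, hqK, fun z hz => ?_⟩
    have h3 : 0 ≤ ⟪y - q, q - z⟫ := by
      have h := hip z hz
      rw [show z - q = -(q - z) by abel, inner_neg_right, neg_nonpos] at h
      exact h
    have h2 : ‖q - z‖ ^ 2 ≤ ‖y - z‖ ^ 2 := by
      have hyz : y - z = (y - q) + (q - z) := by abel
      rw [hyz, norm_add_sq_real]
      nlinarith [sq_nonneg ‖y - q‖]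
    calc ‖q - z‖ = Real.sqrt (‖q - z‖ ^ 2) := (Real.sqrt_sq (norm_nonneg _)).symm
      _ ≤ Real.sqrt (‖y - z‖ ^ 2) := Real.sqrt_le_sqrt h2
      _ = ‖y - z‖ := Real.sqrt_sq (norm_nonneg _)
  obtain ⟨y₀, hy₀K, hmin⟩ := Kcomp.exists_isMinOn Kne gcont.continuousOn
  have hglobal : ∀ y : F, g y₀ ≤ g y := by
    intro y
    obtain ⟨q, hqK, hq⟩ := proj y
    have h1 : g q ≤ g y := by
      apply Finset.sup'_le
      intro x hx
      have hfx : f x ∈ K := subset_convexHull ℝ _ ⟨x, hx, rfl⟩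
      have h2 : φ q x ≤ φ y x := by
        have h3 := hq (f x) hfx
        have h4 : ‖q - f x‖ ^ 2 ≤ ‖y - f x‖ ^ 2 := by
          nlinarith [norm_nonneg (q - f x), norm_nonneg (y - f x)]
        simp only [hφ]; linarith
      exact le_trans h2 (Finset.le_sup' (φ y) hx)
    exact le_trans (isMinOn_iff.mp hmin q hqK) h1
  set M : ℝ := g y₀ with hM
  have hM0 : M ≤ 0 := by
    by_contra hMpos
    push_neg at hMpos
    set T : Finset E := s.filter (fun x => φ y₀ x = M) with hT
    have hTs : T ⊆ s := Finset.filter_subset _ _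
    have hTne : T.Nonempty := by
      obtain ⟨x₀, hx₀s, hx₀⟩ := Finset.exists_mem_eq_sup' hs (φ y₀)
      exact ⟨x₀, Finset.mem_filter.mpr ⟨hx₀s, hx₀.symm⟩⟩
    have hy₀hull : y₀ ∈ convexHull ℝ (f '' (T : Set E)) := by
      by_contra hy₀
      have hHconv : Convex ℝ (convexHull ℝ (f '' (T : Set E))) := convex_convexHull ℝ _
      have hHcl : IsClosed (convexHull ℝ (f '' (T : Set E))) :=
        ((T.finite_toSet.image f).isCompact_convexHull ℝ).isClosed
      obtain ⟨ℓ, u, hu, huy⟩ := geometric_hahn_banach_closed_point hHconv hHcl hy₀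
      set v : F := (InnerProductSpace.toDual ℝ F).symm ℓ with hv
      have hvw : ∀ w : F, ⟪v, w⟫ = ℓ w := fun w => InnerProductSpace.toDual_symm_apply
      set δ : ℝ := ℓ y₀ - u with hδ
      have hδ0 : 0 < δ := sub_pos.mpr huy
      have hvT : ∀ x ∈ T, δ ≤ ⟪v, y₀ - f x⟫ := by
        intro x hx
        rw [inner_sub_right, hvw, hvw]
        have h := hu (f x) (subset_convexHull ℝ _ ⟨x, hx, rfl⟩)
        simp only [hδ]; linarith
      set C : ℝ := s.sup' hs (fun x => |⟪v, y₀ - f x⟫|) with hC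
      have hC0 : 0 ≤ C :=
        le_trans (abs_nonneg _) (Finset.le_sup' (fun x => |⟪v, y₀ - f x⟫|) hs.choose_spec)
      have hCb : ∀ x ∈ s, -C ≤ ⟪v, y₀ - f x⟫ := fun x hx =>
        (abs_le.mp (Finset.le_sup' (fun x => |⟪v, y₀ - f x⟫|) hx)).1
      set σ : ℝ := if h : (s \ T).Nonempty then (s \ T).inf' h (fun x => M - φ y₀ x) else 1
        with hσ
      have hσaux : ∀ x ∈ s \ T, 0 < M - φ y₀ x := by
        intro x hx
        have hxs : x ∈ s := (Finset.mem_sdiff.mp hx).1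
        have hxT : x ∉ T := (Finset.mem_sdiff.mp hx).2
        have h1 : φ y₀ x ≤ M := Finset.le_sup' (φ y₀) hxs
        have h2 : φ y₀ x ≠ M := fun hEq => hxT (Finset.mem_filter.mpr ⟨hxs, hEq⟩)
        exact sub_pos.mpr (lt_of_le_of_ne h1 h2)
      have hσ0 : 0 < σ := by
        rw [hσ]; split_ifs with h
        · exact (Finset.lt_inf'_iff h).mpr (fun x hx => hσaux x hx)
        · exact one_pos
      have hσle : ∀ x ∈ s, x ∉ T → σ ≤ M - φ y₀ x := by
        intro x hxs hxT
        have hmem : x ∈ s \ T := Finset.mem_sdiff.mpr ⟨hxs, hxT⟩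
        rw [hσ, dif_pos ⟨x, hmem⟩]
        exact Finset.inf'_le _ hmem
      set t : ℝ := min 1 (min (δ / (‖v‖ ^ 2 + 1)) (σ / (2 * C + ‖v‖ ^ 2 + 1))) with ht
      have hden1 : (0:ℝ) < ‖v‖ ^ 2 + 1 := by positivity
      have hden2 : (0:ℝ) < 2 * C + ‖v‖ ^ 2 + 1 := by positivity
      have ht0 : 0 < t :=
        lt_min one_pos (lt_min (div_pos hδ0 hden1) (div_pos hσ0 hden2))
      have ht1 : t ≤ 1 := min_le_left _ _
      have htδ : t ≤ δ / (‖v‖ ^ 2 + 1) := le_trans (min_le_right _ _) (min_le_left _ _)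
      have htσ : t ≤ σ / (2 * C + ‖v‖ ^ 2 + 1) := le_trans (min_le_right _ _) (min_le_right _ _)
      have hexp : ∀ x : E, φ (y₀ - t • v) x
          = φ y₀ x - 2 * t * ⟪v, y₀ - f x⟫ + t ^ 2 * ‖v‖ ^ 2 := by
        intro x
        simp only [hφ]
        have h1 : y₀ - t • v - f x = (y₀ - f x) - t • v := by abel
        rw [h1, norm_sub_sq_real, real_inner_smul_right, norm_smul, real_inner_comm]
        simp [abs_mul_abs_self, mul_pow]
        ring
      have key : g (y₀ - t • v) < M := by
        rw [hg]
        rw [Finset.sup'_lt_iff hs]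
        intro x hx
        rw [hexp x]
        by_cases hxT : x ∈ T
        · have h1 : φ y₀ x = M := (Finset.mem_filter.mp hxT).2
          have h2 := hvT x hxT
          have h3 : t * ‖v‖ ^ 2 < δ := by
            calc t * ‖v‖ ^ 2 ≤ (δ / (‖v‖ ^ 2 + 1)) * ‖v‖ ^ 2 :=
                  mul_le_mul_of_nonneg_right htδ (sq_nonneg _)
              _ < δ := by rw [div_mul_eq_mul_div, div_lt_iff₀ hden1]; nlinarith
          rw [h1]
          nlinarith
        · have h1 := hσle x hx hxT
          have h2 := hCb x hx
          have h3 : t * (2 * C + ‖v‖ ^ 2) < σ := by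
            calc t * (2 * C + ‖v‖ ^ 2) ≤ (σ / (2 * C + ‖v‖ ^ 2 + 1)) * (2 * C + ‖v‖ ^ 2) :=
                  mul_le_mul_of_nonneg_right htσ (by positivity)
              _ < σ := by rw [div_mul_eq_mul_div, div_lt_iff₀ hden2]; nlinarith
          have hA : -(2 * t * ⟪v, y₀ - f x⟫) ≤ 2 * t * C := by nlinarith
          have hB : t ^ 2 * ‖v‖ ^ 2 ≤ t * ‖v‖ ^ 2 := by
            nlinarith [mul_le_mul_of_nonneg_right ht1 (mul_nonneg ht0.le (sq_nonneg ‖v‖))]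
          linarith
      exact absurd (hglobal (y₀ - t • v)) (not_le.mpr key)
    -- now use weights from convex hull membership to derive a contradiction
    set I : Finset F := T.image f with hI
    have himg : (f '' (T : Set E)) = (I : Set F) := by simp [hI]
    rw [himg, Finset.convexHull_eq] at hy₀hull
    obtain ⟨w, hw0, hw1, hwy⟩ := hy₀hull
    rw [Finset.centerMass_eq_of_sum_1 _ _ hw1] at hwy
    simp only [id_eq] at hwy
    set b : F → E := fun z => if h : z ∈ I then (Finset.mem_image.mp h).choose else c with hb
    have hbprop : ∀ z ∈ I, b z ∈ T ∧ f (b z) = z := by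
      intro z hz
      simp only [hb, dif_pos hz]
      exact ⟨(Finset.mem_image.mp hz).choose_spec.1, (Finset.mem_image.mp hz).choose_spec.2⟩
    have hwy' : ∑ z ∈ I, w z • z = y₀ := hwy
    have active : ∀ z ∈ I, ‖z - y₀‖ ^ 2 = M + L ^ 2 * ‖b z - c‖ ^ 2 := by
      intro z hz
      have h1 := hbprop z hz
      have h2 : φ y₀ (b z) = M := (Finset.mem_filter.mp h1.1).2
      simp only [hφ] at h2
      rw [h1.2] at h2
      rw [norm_sub_rev]
      linarith
    have E1 : ∑ z ∈ I, w z * ‖z - y₀‖ ^ 2 = M + L ^ 2 * ∑ z ∈ I, w z * ‖b z - c‖ ^ 2 := by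
      calc ∑ z ∈ I, w z * ‖z - y₀‖ ^ 2
          = ∑ z ∈ I, (w z * M + L ^ 2 * (w z * ‖b z - c‖ ^ 2)) :=
            Finset.sum_congr rfl (fun z hz => by rw [active z hz]; ring)
        _ = M + L ^ 2 * ∑ z ∈ I, w z * ‖b z - c‖ ^ 2 := by
            rw [Finset.sum_add_distrib, ← Finset.sum_mul, hw1, ← Finset.mul_sum]; ring
    have E2 : ∑ z ∈ I, ∑ z' ∈ I, w z * w z' * ‖z - z'‖ ^ 2
        = 2 * ∑ z ∈ I, w z * ‖z - y₀‖ ^ 2 := by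
      have h := weighted_pairs' I w (fun z => z) hw1
      simp only [hwy'] at h
      exact h
    have E4 : ∑ z ∈ I, ∑ z' ∈ I, w z * w z' * ‖z - z'‖ ^ 2
        ≤ L ^ 2 * ∑ z ∈ I, ∑ z' ∈ I, w z * w z' * ‖b z - b z'‖ ^ 2 := by
      rw [Finset.mul_sum]
      refine Finset.sum_le_sum fun z hz => ?_
      rw [Finset.mul_sum]
      refine Finset.sum_le_sum fun z' hz' => ?_
      have h1 := hf _ (hTs (hbprop z hz).1) _ (hTs (hbprop z' hz').1)
      rw [(hbprop z hz).2, (hbprop z' hz').2, dist_eq_norm, dist_eq_norm] at h1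
      have h2 : ‖z - z'‖ ^ 2 ≤ L ^ 2 * ‖b z - b z'‖ ^ 2 := by
        nlinarith [norm_nonneg ((z : F) - z'), norm_nonneg (b z - b z')]
      have h3 : 0 ≤ w z * w z' := mul_nonneg (hw0 z hz) (hw0 z' hz')
      nlinarith
    have E5 : ∑ z ∈ I, ∑ z' ∈ I, w z * w z' * ‖b z - b z'‖ ^ 2
        = 2 * ∑ z ∈ I, w z * ‖b z - ∑ z' ∈ I, w z' • b z'‖ ^ 2 := weighted_pairs' I w b hw1
    have E6 : ∑ z ∈ I, w z * ‖b z - ∑ z' ∈ I, w z' • b z'‖ ^ 2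
        ≤ ∑ z ∈ I, w z * ‖b z - c‖ ^ 2 := by
      have h := weighted_identity' I w b hw1 c
      nlinarith [sq_nonneg ‖(∑ z' ∈ I, w z' • b z') - c‖]
    have hL2 : (0:ℝ) ≤ L ^ 2 := sq_nonneg L
    have E7 : L ^ 2 * ∑ z ∈ I, ∑ z' ∈ I, w z * w z' * ‖b z - b z'‖ ^ 2
        ≤ L ^ 2 * (2 * ∑ z ∈ I, w z * ‖b z - c‖ ^ 2) := by
      rw [E5]
      apply mul_le_mul_of_nonneg_left _ hL2
      linarith
    linarith [E4, E2, E1, E7]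
  -- conclude
  refine ⟨y₀, fun x hx => ?_⟩
  have h1 : φ y₀ x ≤ 0 := le_trans (Finset.le_sup' (φ y₀) hx) hM0
  have h2 : ‖y₀ - f x‖ ^ 2 ≤ L ^ 2 * ‖x - c‖ ^ 2 := by simp only [hφ] at h1; linarith
  have h3 : ‖x - c‖ ≤ r := by rw [← dist_eq_norm]; exact hr x hx
  have h4 : ‖f x - y₀‖ ^ 2 ≤ (L * r) ^ 2 := by
    rw [norm_sub_rev]
    nlinarith [mul_le_mul_of_nonneg_left (mul_le_mul h3 h3 (norm_nonneg (x - c)) hr0)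
      (sq_nonneg L)]
  rw [dist_eq_norm]
  calc ‖f x - y₀‖ = Real.sqrt (‖f x - y₀‖ ^ 2) := (Real.sqrt_sq (norm_nonneg _)).symm
    _ ≤ Real.sqrt ((L * r) ^ 2) := Real.sqrt_le_sqrt h4
    _ = L * r := Real.sqrt_sq (by positivity)


noncomputable def encRadius {d : ℕ} (S : Set (EuclideanSpace ℝ (Fin d))) : ℝ :=
  ⨅ c : EuclideanSpace ℝ (Fin d), ⨆ x ∈ S, dist x c

lemma encRadius_nonneg {d : ℕ} (S : Set (EuclideanSpace ℝ (Fin d))) : 0 ≤ encRadius S :=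
  le_ciInf fun _ => Real.iSup_nonneg fun _ => Real.iSup_nonneg fun _ => dist_nonneg

lemma encRadius_le {d : ℕ} {S : Set (EuclideanSpace ℝ (Fin d))}
    {c : EuclideanSpace ℝ (Fin d)} {r : ℝ} (hr : 0 ≤ r)
    (h : ∀ x ∈ S, dist x c ≤ r) : encRadius S ≤ r := by
  have h1 : (⨆ x ∈ S, dist x c) ≤ r :=
    Real.iSup_le (fun x => Real.iSup_le (fun hx => h x hx) hr) hr
  refine le_trans (ciInf_le ?_ c) h1
  refine ⟨0, ?_⟩
  rintro y ⟨c', rfl⟩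
  exact Real.iSup_nonneg fun _ => Real.iSup_nonneg fun _ => dist_nonneg

lemma encRadius_exists_center {d : ℕ} {S : Set (EuclideanSpace ℝ (Fin d))} (hS : S.Finite)
    {r : ℝ} (h : encRadius S < r) :
    ∃ c : EuclideanSpace ℝ (Fin d), ∀ x ∈ S, dist x c ≤ r := by
  obtain ⟨c, hc⟩ := exists_lt_of_ciInf_lt h
  refine ⟨c, fun x hx => ?_⟩
  have hb : BddAbove (Set.range fun x => ⨆ _ : x ∈ S, dist x c) := by
    apply BddAbove.mono _ ((hS.image (fun x => dist x c)).insert 0).bddAbove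
    rintro y ⟨x', rfl⟩
    show (⨆ _ : x' ∈ S, dist x' c) ∈ insert (0:ℝ) ((fun x => dist x c) '' S)
    by_cases hx' : x' ∈ S
    · haveI : Nonempty (x' ∈ S) := ⟨hx'⟩
      rw [ciSup_const]
      exact Set.mem_insert_of_mem _ ⟨x', hx', rfl⟩
    · haveI : IsEmpty (x' ∈ S) := ⟨hx'⟩
      rw [Real.iSup_of_isEmpty]
      exact Set.mem_insert _ _
  have h1 : dist x c ≤ ⨆ x ∈ S, dist x c := by
    have e : (⨆ _ : x ∈ S, dist x c) = dist x c := by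
      haveI : Nonempty (x ∈ S) := ⟨hx⟩
      exact ciSup_const
    rw [← e]
    exact le_ciSup hb x
  exact le_trans h1 hc.le

/-- The interleaving condition on Čech simplices: under the JL property,
ρ(S) ≤ α implies ρ(f(S)) ≤ α/(1−ε), and ρ(f(S)) ≤ α implies ρ(S) ≤ α/(1−ε). -/
theorem stmt_15 {d m : ℕ} (X : Set (EuclideanSpace ℝ (Fin d))) (hX : X.Finite)
    (ε : ℝ) (hε0 : 0 ≤ ε) (hε1 : ε < 1)
    (f : EuclideanSpace ℝ (Fin d) → EuclideanSpace ℝ (Fin m))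
    (hf : ∀ x ∈ X, ∀ y ∈ X,
      (1 - ε) * ‖x - y‖ ≤ ‖f x - f y‖ ∧ ‖f x - f y‖ ≤ (1 + ε) * ‖x - y‖) :
    ∀ S ⊆ X, ∀ α : ℝ,
      (encRadius S ≤ α → encRadius (f '' S) ≤ α / (1 - ε)) ∧
        (encRadius (f '' S) ≤ α → encRadius S ≤ α / (1 - ε)) := by
  intro S hSX α
  have hS : S.Finite := hX.subset hSX
  have hε : (0:ℝ) < 1 - ε := by linarith
  constructor
  · intro hα
    have hα0 : 0 ≤ α := le_trans (encRadius_nonneg S) hα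
    have key : ∀ β : ℝ, α < β → encRadius (f '' S) ≤ β / (1 - ε) := by
      intro β hβ
      have hβ0 : 0 ≤ β := le_trans hα0 hβ.le
      obtain ⟨c, hc⟩ := encRadius_exists_center hS (lt_of_le_of_lt hα hβ)
      obtain ⟨y, hy⟩ := onePoint_ext hS.toFinset f (1 + ε) β (by linarith) c
        (fun x hx => hc x (hS.mem_toFinset.mp hx))
        (fun x hx x' hx' => by
          rw [dist_eq_norm, dist_eq_norm]
          exact (hf x (hSX (hS.mem_toFinset.mp hx)) x' (hSX (hS.mem_toFinset.mp hx'))).2)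
      apply encRadius_le (div_nonneg hβ0 hε.le)
      rintro z ⟨x, hxS, rfl⟩
      refine le_trans (hy x (hS.mem_toFinset.mpr hxS)) ?_
      rw [le_div_iff₀ hε]
      nlinarith [mul_nonneg (mul_self_nonneg ε) hβ0]
    rw [le_div_iff₀ hε]
    refine le_of_forall_gt_imp_ge_of_dense fun β hβ => ?_
    have h := key β hβ
    rwa [le_div_iff₀ hε] at h
  · intro hα
    have hα0 : 0 ≤ α := le_trans (encRadius_nonneg _) hα
    classical
    set g : EuclideanSpace ℝ (Fin m) → EuclideanSpace ℝ (Fin d) :=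
      fun z => if h : ∃ x, x ∈ S ∧ f x = z then h.choose else 0 with hg
    have hgS : ∀ z ∈ f '' S, g z ∈ S ∧ f (g z) = z := by
      rintro z ⟨x, hxS, rfl⟩
      have hex : ∃ x', x' ∈ S ∧ f x' = f x := ⟨x, hxS, rfl⟩
      simp only [hg, dif_pos hex]
      exact ⟨hex.choose_spec.1, hex.choose_spec.2⟩
    have hinj : ∀ x ∈ S, g (f x) = x := by
      intro x hxS
      obtain ⟨h1, h2⟩ := hgS (f x) ⟨x, hxS, rfl⟩
      have h3 := (hf _ (hSX h1) x (hSX hxS)).1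
      rw [h2, sub_self, norm_zero] at h3
      have h5 : ‖g (f x) - x‖ = 0 :=
        le_antisymm (by nlinarith [norm_nonneg (g (f x) - x)]) (norm_nonneg _)
      exact sub_eq_zero.mp (norm_eq_zero.mp h5)
    set s' : Finset (EuclideanSpace ℝ (Fin m)) := (hS.image f).toFinset with hs'
    have hs'mem : ∀ z, z ∈ s' ↔ z ∈ f '' S := fun z => (hS.image f).mem_toFinset
    have hLip : ∀ z ∈ s', ∀ z' ∈ s', dist (g z) (g z') ≤ (1 - ε)⁻¹ * dist z z' := by
      intro z hz z' hz'
      obtain ⟨hz1, hz2⟩ := hgS z ((hs'mem z).mp hz)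
      obtain ⟨hz1', hz2'⟩ := hgS z' ((hs'mem z').mp hz')
      have h1 := (hf _ (hSX hz1) _ (hSX hz1')).1
      rw [hz2, hz2'] at h1
      rw [dist_eq_norm, dist_eq_norm, ← one_mul ‖g z - g z'‖]
      rw [inv_mul_eq_div, le_div_iff₀ hε]
      linarith
    have key : ∀ β : ℝ, α < β → encRadius S ≤ β / (1 - ε) := by
      intro β hβ
      have hβ0 : 0 ≤ β := le_trans hα0 hβ.le
      obtain ⟨c, hc⟩ := encRadius_exists_center (hS.image f) (lt_of_le_of_lt hα hβ)
      obtain ⟨y, hy⟩ := onePoint_ext s' g (1 - ε)⁻¹ β (by positivity) c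
        (fun z hz => hc z ((hs'mem z).mp hz)) hLip
      apply encRadius_le (div_nonneg hβ0 hε.le)
      intro x hxS
      have h1 := hy (f x) ((hs'mem _).mpr ⟨x, hxS, rfl⟩)
      rw [hinj x hxS] at h1
      rwa [inv_mul_eq_div] at h1
    rw [le_div_iff₀ hε]
    refine le_of_forall_gt_imp_ge_of_dense fun β hβ => ?_
    have h := key β hβ
    rwa [le_div_iff₀ hε] at h
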